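/- Distribution of MIPairs depends only on the intersection size: let P ⊆ [n] × [n] be any set of c pairs whose first coordinates are pairwise distinct and whose second coordinates are pairwise distinct, and let π_1, π_2 be independent uniformly random permutations of [n]. Then the random set {(π_1(i), π_2(j)) : (i,j) ∈ P} has a distribution that depends only on c, i.e., for any two such sets P, P' of equal size c, the resulting distributions are identical. -/
import Mathlib

lemma map_equiv_uniform {α : Type*} [Fintype α] [Nonempty α] (e : α ≃ α) :
    PMF.map e (PMF.uniformOfFintype α) = PMF.uniformOfFintype α := by
  ext b
  rw [PMF.map_apply]
  rw [tsum_eq_single (e.symm b) (fun a ha => if_neg fun h => ha (by simp [h]))]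
  simp [PMF.uniformOfFintype_apply]

section Helper
variable {n : ℕ} {P P' : Finset (Fin n × Fin n)}

lemma exists_sigma
    (hP1 : ∀ p ∈ P, ∀ q ∈ P, p.1 = q.1 → p = q)
    (hP2 : ∀ p ∈ P, ∀ q ∈ P, p.2 = q.2 → p = q)
    (hP'1 : ∀ p ∈ P', ∀ q ∈ P', p.1 = q.1 → p = q)
    (hP'2 : ∀ p ∈ P', ∀ q ∈ P', p.2 = q.2 → p = q)
    (hcard : P.card = P'.card) :
    ∃ σ₁ σ₂ : Equiv.Perm (Fin n), ∀ π₁ π₂ : Equiv.Perm (Fin n),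
      P'.image (fun p => (π₁ p.1, π₂ p.2))
        = P.image (fun p => (π₁ (σ₁ p.1), π₂ (σ₂ p.2))) := by
  classical
  let f : (P : Type) ≃ (P' : Type) := Finset.equivOfCardEq hcard
  -- bijections from P to images of coordinates
  have mk1 : ∀ p : (P : Type), (p : Fin n × Fin n).1 ∈ P.image Prod.fst :=
    fun p => Finset.mem_image_of_mem _ p.2
  have mk2 : ∀ p : (P : Type), (p : Fin n × Fin n).2 ∈ P.image Prod.snd :=
    fun p => Finset.mem_image_of_mem _ p.2
  have mk1' : ∀ p : (P' : Type), (p : Fin n × Fin n).1 ∈ P'.image Prod.fst :=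
    fun p => Finset.mem_image_of_mem _ p.2
  have mk2' : ∀ p : (P' : Type), (p : Fin n × Fin n).2 ∈ P'.image Prod.snd :=
    fun p => Finset.mem_image_of_mem _ p.2
  have bij1 : Function.Bijective (fun p : (P : Type) =>
      (⟨(p : Fin n × Fin n).1, mk1 p⟩ : {x // x ∈ P.image Prod.fst})) := by
    constructor
    · rintro ⟨p, hp⟩ ⟨q, hq⟩ h
      simpa using hP1 p hp q hq (by simpa using congrArg Subtype.val h)
    · rintro ⟨x, hx⟩
      obtain ⟨p, hp, rfl⟩ := Finset.mem_image.1 hx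
      exact ⟨⟨p, hp⟩, rfl⟩
  have bij2 : Function.Bijective (fun p : (P : Type) =>
      (⟨(p : Fin n × Fin n).2, mk2 p⟩ : {x // x ∈ P.image Prod.snd})) := by
    constructor
    · rintro ⟨p, hp⟩ ⟨q, hq⟩ h
      simpa using hP2 p hp q hq (by simpa using congrArg Subtype.val h)
    · rintro ⟨x, hx⟩
      obtain ⟨p, hp, rfl⟩ := Finset.mem_image.1 hx
      exact ⟨⟨p, hp⟩, rfl⟩
  have bij1' : Function.Bijective (fun p : (P' : Type) =>
      (⟨(p : Fin n × Fin n).1, mk1' p⟩ : {x // x ∈ P'.image Prod.fst})) := by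
    constructor
    · rintro ⟨p, hp⟩ ⟨q, hq⟩ h
      simpa using hP'1 p hp q hq (by simpa using congrArg Subtype.val h)
    · rintro ⟨x, hx⟩
      obtain ⟨p, hp, rfl⟩ := Finset.mem_image.1 hx
      exact ⟨⟨p, hp⟩, rfl⟩
  have bij2' : Function.Bijective (fun p : (P' : Type) =>
      (⟨(p : Fin n × Fin n).2, mk2' p⟩ : {x // x ∈ P'.image Prod.snd})) := by
    constructor
    · rintro ⟨p, hp⟩ ⟨q, hq⟩ h
      simpa using hP'2 p hp q hq (by simpa using congrArg Subtype.val h)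
    · rintro ⟨x, hx⟩
      obtain ⟨p, hp, rfl⟩ := Finset.mem_image.1 hx
      exact ⟨⟨p, hp⟩, rfl⟩
  let e1 : (P : Type) ≃ {x // x ∈ P.image Prod.fst} := Equiv.ofBijective _ bij1
  let e2 : (P : Type) ≃ {x // x ∈ P.image Prod.snd} := Equiv.ofBijective _ bij2
  let e1' : (P' : Type) ≃ {x // x ∈ P'.image Prod.fst} := Equiv.ofBijective _ bij1'
  let e2' : (P' : Type) ≃ {x // x ∈ P'.image Prod.snd} := Equiv.ofBijective _ bij2'
  let σ₁ : Equiv.Perm (Fin n) := Equiv.extendSubtype ((e1.symm.trans f).trans e1')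
  let σ₂ : Equiv.Perm (Fin n) := Equiv.extendSubtype ((e2.symm.trans f).trans e2')
  have hσ₁ : ∀ p : (P : Type), σ₁ (p : Fin n × Fin n).1 = ((f p : Fin n × Fin n)).1 := by
    intro p
    have := Equiv.extendSubtype_apply_of_mem ((e1.symm.trans f).trans e1')
      (p : Fin n × Fin n).1 (mk1 p)
    rw [this]
    have he : e1.symm ⟨(p : Fin n × Fin n).1, mk1 p⟩ = p := by
      rw [Equiv.symm_apply_eq]; rfl
    simp [Equiv.trans_apply, he, e1']
  have hσ₂ : ∀ p : (P : Type), σ₂ (p : Fin n × Fin n).2 = ((f p : Fin n × Fin n)).2 := by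
    intro p
    have := Equiv.extendSubtype_apply_of_mem ((e2.symm.trans f).trans e2')
      (p : Fin n × Fin n).2 (mk2 p)
    rw [this]
    have he : e2.symm ⟨(p : Fin n × Fin n).2, mk2 p⟩ = p := by
      rw [Equiv.symm_apply_eq]; rfl
    simp [Equiv.trans_apply, he, e2']
  refine ⟨σ₁, σ₂, fun π₁ π₂ => ?_⟩
  ext x
  simp only [Finset.mem_image]
  constructor
  · rintro ⟨q, hq, rfl⟩
    refine ⟨(f.symm ⟨q, hq⟩ : Fin n × Fin n), (f.symm ⟨q, hq⟩).2, ?_⟩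
    rw [hσ₁, hσ₂, f.apply_symm_apply]
  · rintro ⟨p, hp, rfl⟩
    refine ⟨(f ⟨p, hp⟩ : Fin n × Fin n), (f ⟨p, hp⟩).2, ?_⟩
    rw [hσ₁ ⟨p, hp⟩, hσ₂ ⟨p, hp⟩]

end Helper




/-- Distribution of `MIPairs` depends only on the intersection size: for two sets `P`, `P'` of
`c` index pairs, each with pairwise distinct first coordinates and pairwise distinct second
coordinates, applying independent uniform permutations `π₁, π₂` coordinatewise yields
identically distributed random sets. -/
theorem mipairs_distribution_depends_only_on_size (n c : ℕ)
    (P P' : Finset (Fin n × Fin n))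
    (hP1 : ∀ p ∈ P, ∀ q ∈ P, p.1 = q.1 → p = q)
    (hP2 : ∀ p ∈ P, ∀ q ∈ P, p.2 = q.2 → p = q)
    (hP'1 : ∀ p ∈ P', ∀ q ∈ P', p.1 = q.1 → p = q)
    (hP'2 : ∀ p ∈ P', ∀ q ∈ P', p.2 = q.2 → p = q)
    (hc : P.card = c) (hc' : P'.card = c) :
    PMF.map
        (fun π : Equiv.Perm (Fin n) × Equiv.Perm (Fin n) =>
          P.image (fun p => (π.1 p.1, π.2 p.2)))
        (PMF.uniformOfFintype (Equiv.Perm (Fin n) × Equiv.Perm (Fin n))) =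
      PMF.map
        (fun π : Equiv.Perm (Fin n) × Equiv.Perm (Fin n) =>
          P'.image (fun p => (π.1 p.1, π.2 p.2)))
        (PMF.uniformOfFintype (Equiv.Perm (Fin n) × Equiv.Perm (Fin n))) := by
  obtain ⟨σ₁, σ₂, hσ⟩ := exists_sigma hP1 hP2 hP'1 hP'2 (hc.trans hc'.symm)
  let E : Equiv.Perm (Fin n) × Equiv.Perm (Fin n) ≃ Equiv.Perm (Fin n) × Equiv.Perm (Fin n) :=
    Equiv.prodCongr (Equiv.mulRight σ₁) (Equiv.mulRight σ₂)
  have key : (fun π : Equiv.Perm (Fin n) × Equiv.Perm (Fin n) =>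
        P'.image (fun p => (π.1 p.1, π.2 p.2)))
      = (fun π : Equiv.Perm (Fin n) × Equiv.Perm (Fin n) =>
        P.image (fun p => (π.1 p.1, π.2 p.2))) ∘ E := by
    funext π
    refine (hσ π.1 π.2).trans ?_
    simp [E, Equiv.Perm.mul_apply]
  rw [key, ← PMF.map_comp, map_equiv_uniform E]
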